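/- Let (X,d) be an unbounded metric space and let r̃ be a scaling sequence. Then the weighted shortest-path pseudometric d*_{ρ_X} on the vertex set of the weighted cluster graph G_{X,r̃}(ρ_X) is in fact a metric, and G_{X,r̃}(ρ_X) is metrizable by d*_{ρ_X}, i.e., d*_{ρ_X}(u,v)=ρ_X({u,v}) holds for every edge {u,v} of G_{X,r̃}. -/

import Mathlib

open Filter Topology
open scoped Classical

/-- An unbounded metric space. -/
def UnboundedSpace (X : Type*) [MetricSpace X] : Prop :=
  ¬ Bornology.IsBounded (Set.univ : Set X)

/-- A scaling sequence: positive reals tending to infinity. -/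
def ScalingSeq (r : ℕ → ℝ) : Prop :=
  (∀ n, 0 < r n) ∧ Filter.Tendsto r Filter.atTop Filter.atTop

/-- Two sequences are mutually stable w.r.t. `r` if `d(x_n, y_n)/r_n` has a finite limit. -/
def MutuallyStable {X : Type*} [MetricSpace X] (r : ℕ → ℝ) (x y : ℕ → X) : Prop :=
  ∃ L : ℝ, Filter.Tendsto (fun n => dist (x n) (y n) / r n) Filter.atTop (nhds L)

/-- `Seq(X, r̃)`: sequences going to infinity such that `d(x_n, p)/r_n` has a finite limit. -/
def SeqInf {X : Type*} [MetricSpace X] (r : ℕ → ℝ) (p : X) : Set (ℕ → X) :=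
  {x | Filter.Tendsto (fun n => dist (x n) p) Filter.atTop Filter.atTop ∧
    ∃ L : ℝ, Filter.Tendsto (fun n => dist (x n) p / r n) Filter.atTop (nhds L)}

/-- The relation `x̃ ≡ ỹ`, i.e. `d(x_n, y_n)/r_n → 0`. -/
def EquivSeq {X : Type*} [MetricSpace X] (r : ℕ → ℝ) (x y : ℕ → X) : Prop :=
  Filter.Tendsto (fun n => dist (x n) (y n) / r n) Filter.atTop (nhds 0)

/-- The `≡`-equivalence class of `x` inside `Seq(X, r̃)`. -/
def classOf {X : Type*} [MetricSpace X] (r : ℕ → ℝ) (p : X) (x : ℕ → X) : Set (ℕ → X) :=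
  {y | y ∈ SeqInf r p ∧ EquivSeq r x y}

/-- The vertex set of the cluster graph `G_{X, r̃}`: all `≡`-classes of `Seq(X, r̃)`. -/
def VertexSet {X : Type*} [MetricSpace X] (r : ℕ → ℝ) (p : X) : Set (Set (ℕ → X)) :=
  {v | ∃ x ∈ SeqInf r p, v = classOf r p x}

/-- Adjacency in the cluster graph `G_{X, r̃}`: distinct classes whose representatives
are mutually stable. -/
def AdjacentCl {X : Type*} [MetricSpace X] (r : ℕ → ℝ) (p : X) (u v : Set (ℕ → X)) : Prop :=
  u ∈ VertexSet r p ∧ v ∈ VertexSet r p ∧ u ≠ v ∧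
    ∀ x ∈ u, ∀ y ∈ v, MutuallyStable r x y

/-- The weight `ρ_X` on the cluster graph: for an edge `{u,v}` it is the (unique) limit
`lim d(x_n, y_n)/r_n` for representatives. -/
noncomputable def rhoX {X : Type*} [MetricSpace X] (r : ℕ → ℝ) (u v : Set (ℕ → X)) : ℝ :=
  sSup {L : ℝ | ∃ x ∈ u, ∃ y ∈ v,
    Filter.Tendsto (fun n => dist (x n) (y n) / r n) Filter.atTop (nhds L)}

/-- The root `ν₀ = X̃⁰_{∞,r̃}`: sequences with `d(z_n,p) → ∞` and `d(z_n,p)/r_n → 0`. -/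
def rootClass {X : Type*} [MetricSpace X] (r : ℕ → ℝ) (p : X) : Set (ℕ → X) :=
  {z | Filter.Tendsto (fun n => dist (z n) p) Filter.atTop Filter.atTop ∧
    Filter.Tendsto (fun n => dist (z n) p / r n) Filter.atTop (nhds 0)}

/-- The labeling `ρ⁰` of vertices: `ρ⁰(v) = lim d(x_n,p)/r_n` for `x̃ ∈ v`. -/
noncomputable def rho0 {X : Type*} [MetricSpace X] (r : ℕ → ℝ) (p : X)
    (v : Set (ℕ → X)) : ℝ :=
  sSup {L : ℝ | ∃ x ∈ v, Filter.Tendsto (fun n => dist (x n) p / r n) Filter.atTop (nhds L)}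

/-- A self-stable family: a subset of `Seq(X, r̃)` any two of whose members are
mutually stable. -/
def SelfStable {X : Type*} [MetricSpace X] (r : ℕ → ℝ) (p : X) (F : Set (ℕ → X)) : Prop :=
  F ⊆ SeqInf r p ∧ ∀ x ∈ F, ∀ y ∈ F, MutuallyStable r x y

/-- A maximal self-stable set `X̃_{∞, r̃}`. -/
def MaxSelfStable {X : Type*} [MetricSpace X] (r : ℕ → ℝ) (p : X) (F : Set (ℕ → X)) : Prop :=
  SelfStable r p F ∧ ∀ F', SelfStable r p F' → F ⊆ F' → F = F'

/-- The pretangent space `Ω^X_{∞,r̃}` attached to a maximal self-stable set `F`: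
the set of `≡`-classes of members of `F`. -/
def PretangentCl {X : Type*} [MetricSpace X] (r : ℕ → ℝ) (F : Set (ℕ → X)) :
    Set (Set (ℕ → X)) :=
  {v | ∃ x ∈ F, v = {y | y ∈ F ∧ EquivSeq r x y}}

/-- A clique in the cluster graph `G_{X, r̃}`. -/
def IsCliqueCl {X : Type*} [MetricSpace X] (r : ℕ → ℝ) (p : X)
    (C : Set (Set (ℕ → X))) : Prop :=
  C ⊆ VertexSet r p ∧ ∀ u ∈ C, ∀ v ∈ C, u ≠ v → AdjacentCl r p u v

/-- The set of weights of paths joining `u` and `v` in the graph given by the adjacency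
relation `adj`, with edge weight `w`. -/
def PathWeights {V : Type*} (adj : V → V → Prop) (w : V → V → ℝ) (u v : V) : Set ℝ :=
  {s | ∃ n : ℕ, ∃ f : Fin (n + 1) → V, f 0 = u ∧ f (Fin.last n) = v ∧
    Function.Injective f ∧ (∀ i : Fin n, adj (f i.castSucc) (f i.succ)) ∧
    s = ∑ i : Fin n, w (f i.castSucc) (f i.succ)}

/-- The weighted shortest-path pseudometric `d*_w`. -/
noncomputable def spDist {V : Type*} (adj : V → V → Prop) (w : V → V → ℝ) (u v : V) : ℝ :=
  if u = v then 0 else sInf (PathWeights adj w u v)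

section Lemmas
variable {X : Type*} [MetricSpace X] {r : ℕ → ℝ} {p : X}

lemma tendsto_perturb {f g h : ℕ → ℝ} {L : ℝ}
    (hf : Tendsto f atTop (nhds L)) (hh : Tendsto h atTop (nhds 0))
    (hb : ∀ n, |g n - f n| ≤ h n) : Tendsto g atTop (nhds L) := by
  have h1 : Tendsto (fun n => g n - f n) atTop (nhds 0) := squeeze_zero_norm hb hh
  have := hf.add h1
  simpa using this

lemma EquivSeq.refl' (r : ℕ → ℝ) (x : ℕ → X) : EquivSeq r x x := by
  unfold EquivSeq
  simp only [dist_self, zero_div]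
  exact tendsto_const_nhds

lemma EquivSeq.symm' {x y : ℕ → X} (h : EquivSeq r x y) : EquivSeq r y x := by
  unfold EquivSeq at *
  simpa [dist_comm] using h

lemma EquivSeq.trans' (hr : ScalingSeq r) {x y z : ℕ → X}
    (h1 : EquivSeq r x y) (h2 : EquivSeq r y z) : EquivSeq r x z := by
  unfold EquivSeq at *
  have := h1.add h2
  rw [add_zero] at this
  refine squeeze_zero (fun n => div_nonneg dist_nonneg (hr.1 n).le) (fun n => ?_) this
  have hrn := (hr.1 n)
  rw [← add_div]
  exact div_le_div_of_nonneg_right (dist_triangle _ _ _) hrn.le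

lemma mem_classOf_self {x : ℕ → X} (hx : x ∈ SeqInf r p) : x ∈ classOf r p x :=
  ⟨hx, EquivSeq.refl' r x⟩

lemma vertex_nonempty {u : Set (ℕ → X)} (hu : u ∈ VertexSet r p) : ∃ x, x ∈ u := by
  obtain ⟨x, hx, rfl⟩ := hu
  exact ⟨x, mem_classOf_self hx⟩

lemma mem_vertex_seqInf {u : Set (ℕ → X)} (hu : u ∈ VertexSet r p) {x : ℕ → X}
    (hx : x ∈ u) : x ∈ SeqInf r p := by
  obtain ⟨a, ha, rfl⟩ := hu
  exact hx.1

lemma mem_vertex_equiv (hr : ScalingSeq r) {u : Set (ℕ → X)} (hu : u ∈ VertexSet r p)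
    {x y : ℕ → X} (hx : x ∈ u) (hy : y ∈ u) : EquivSeq r x y := by
  obtain ⟨a, ha, rfl⟩ := hu
  exact (hx.2.symm').trans' hr hy.2

lemma vertex_eq_of_equiv (hr : ScalingSeq r) {u v : Set (ℕ → X)}
    (hu : u ∈ VertexSet r p) (hv : v ∈ VertexSet r p) {x y : ℕ → X}
    (hx : x ∈ u) (hy : y ∈ v) (h : EquivSeq r x y) : u = v := by
  obtain ⟨a, ha, rfl⟩ := hu
  obtain ⟨b, hb, rfl⟩ := hv
  have hab : EquivSeq r a b := (hx.2.trans' hr h).trans' hr hy.2.symm'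
  ext z
  exact ⟨fun hz => ⟨hz.1, hab.symm'.trans' hr hz.2⟩,
    fun hz => ⟨hz.1, hab.trans' hr hz.2⟩⟩

/-- transported limit: if `d(x,y)/r → L` and `x ≡ x'`, `y ≡ y'` then `d(x',y')/r → L`. -/
lemma tendsto_dist_congr (hr : ScalingSeq r) {x y x' y' : ℕ → X} {L : ℝ}
    (h : Tendsto (fun n => dist (x n) (y n) / r n) atTop (nhds L))
    (hx : EquivSeq r x x') (hy : EquivSeq r y y') :
    Tendsto (fun n => dist (x' n) (y' n) / r n) atTop (nhds L) := by
  refine tendsto_perturb h (by simpa using hx.add hy) (fun n => ?_)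
  have hrn := hr.1 n
  rw [div_sub_div_same, ← add_div, abs_div, abs_of_pos hrn]
  refine div_le_div_of_nonneg_right ?_ hrn.le
  have := dist_dist_dist_le (x' n) (y' n) (x n) (y n)
  calc |dist (x' n) (y' n) - dist (x n) (y n)| ≤ dist (x' n) (x n) + dist (y' n) (y n) := this
    _ = dist (x n) (x' n) + dist (y n) (y' n) := by rw [dist_comm, dist_comm (y' n)]

/-- The edge-limit lemma: for adjacent `u v`, all representative pairs converge to `rhoX r u v`. -/
lemma rhoX_spec (hr : ScalingSeq r) {u v : Set (ℕ → X)} (h : AdjacentCl r p u v)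
    {x y : ℕ → X} (hx : x ∈ u) (hy : y ∈ v) :
    Tendsto (fun n => dist (x n) (y n) / r n) atTop (nhds (rhoX r u v)) := by
  obtain ⟨hu, hv, hne, hst⟩ := h
  obtain ⟨L, hL⟩ := hst x hx y hy
  have hset : {L' : ℝ | ∃ a ∈ u, ∃ b ∈ v,
      Tendsto (fun n => dist (a n) (b n) / r n) atTop (nhds L')} = {L} := by
    ext L'
    simp only [Set.mem_setOf_eq, Set.mem_singleton_iff]
    constructor
    · rintro ⟨a, ha, b, hb, hab⟩
      have h1 : Tendsto (fun n => dist (x n) (y n) / r n) atTop (nhds L') :=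
        tendsto_dist_congr hr hab (mem_vertex_equiv hr hu ha hx) (mem_vertex_equiv hr hv hb hy)
      exact tendsto_nhds_unique h1 hL
    · rintro rfl
      exact ⟨x, hx, y, hy, hL⟩
  rw [rhoX, hset, csSup_singleton]
  exact hL

lemma rhoX_nonneg (hr : ScalingSeq r) {u v : Set (ℕ → X)} (h : AdjacentCl r p u v) :
    0 ≤ rhoX r u v := by
  obtain ⟨x, hx⟩ := vertex_nonempty h.1
  obtain ⟨y, hy⟩ := vertex_nonempty h.2.1
  have := rhoX_spec hr h hx hy
  exact ge_of_tendsto this (Filter.Eventually.of_forall fun n => div_nonneg dist_nonneg (hr.1 n).le)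

lemma adjacent_symm {u v : Set (ℕ → X)} (h : AdjacentCl r p u v) : AdjacentCl r p v u := by
  obtain ⟨hu, hv, hne, hst⟩ := h
  refine ⟨hv, hu, hne.symm, fun y hy x hx => ?_⟩
  obtain ⟨L, hL⟩ := hst x hx y hy
  exact ⟨L, by simpa [dist_comm] using hL⟩

lemma rhoX_symm (u v : Set (ℕ → X)) : rhoX r u v = rhoX r v u := by
  unfold rhoX
  congr 1
  ext L
  constructor
  · rintro ⟨x, hx, y, hy, h⟩
    exact ⟨y, hy, x, hx, by simpa [dist_comm] using h⟩
  · rintro ⟨x, hx, y, hy, h⟩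
    exact ⟨y, hy, x, hx, by simpa [dist_comm] using h⟩

end Lemmas
section Root
variable {X : Type*} [MetricSpace X] {r : ℕ → ℝ} {p : X}

lemma tendsto_div_perturb (hr : ScalingSeq r) {f g h : ℕ → ℝ} {L : ℝ}
    (hf : Tendsto (fun n => f n / r n) atTop (nhds L))
    (hh : Tendsto (fun n => h n / r n) atTop (nhds 0))
    (hb : ∀ n, |g n - f n| ≤ h n) :
    Tendsto (fun n => g n / r n) atTop (nhds L) := by
  refine tendsto_perturb hf hh (fun n => ?_)
  rw [div_sub_div_same, abs_div, abs_of_pos (hr.1 n)]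
  exact div_le_div_of_nonneg_right (hb n) (hr.1 n).le

/-- Existence of a "root" sequence: `d(z_n,p) → ∞` while `d(z_n,p)/r_n → 0`. -/
lemma exists_root (hX : UnboundedSpace X) (hr : ScalingSeq r) (p : X) :
    ∃ z : ℕ → X, Tendsto (fun n => dist (z n) p) atTop atTop ∧
      Tendsto (fun n => dist (z n) p / r n) atTop (nhds 0) := by
  have ha : ∀ k : ℕ, ∃ x : X, (k : ℝ) < dist x p := by
    intro k
    by_contra hcon
    push_neg at hcon
    exact hX ((Metric.isBounded_iff_subset_closedBall p).2
      ⟨k, fun x _ => by simpa [Metric.mem_closedBall, dist_comm] using hcon x⟩)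
  choose a hak using ha
  set b : ℕ → ℝ := fun k => dist (a k) p with hb
  set s : ℕ → ℝ := fun n => Real.sqrt (r n) with hs
  have hs_top : Tendsto s atTop atTop := by
    rw [tendsto_atTop]
    intro C
    have := (tendsto_atTop.1 hr.2) (max C 0 ^ 2)
    filter_upwards [this] with n hn
    calc C ≤ max C 0 := le_max_left _ _
      _ = Real.sqrt (max C 0 ^ 2) := by rw [Real.sqrt_sq (le_max_right _ _)]
      _ ≤ s n := Real.sqrt_le_sqrt hn
  set m : ℕ → ℕ := fun n => Nat.findGreatest (fun k => b k ≤ s n) n with hm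
  refine ⟨fun n => a (m n), ?_, ?_⟩
  · rw [tendsto_atTop]
    intro C
    obtain ⟨K, hK⟩ := exists_nat_ge C
    have h1 : ∀ᶠ n in atTop, b K ≤ s n := (tendsto_atTop.1 hs_top) (b K)
    have h2 : ∀ᶠ n in atTop, K ≤ n := eventually_ge_atTop K
    filter_upwards [h1, h2] with n hn1 hn2
    have hmK : K ≤ m n := Nat.le_findGreatest (P := fun k => b k ≤ s n) hn2 hn1
    have : (K : ℝ) ≤ (m n : ℝ) := Nat.cast_le.2 hmK
    exact le_trans hK (le_trans this (hak (m n)).le)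
  · have h0 : ∀ᶠ n in atTop, b 0 ≤ s n := (tendsto_atTop.1 hs_top) (b 0)
    refine squeeze_zero' (g := fun n => (s n)⁻¹) ?_ ?_ ?_
    · exact Filter.Eventually.of_forall fun n => div_nonneg dist_nonneg (hr.1 n).le
    · filter_upwards [h0] with n hn
      have hbm : b (m n) ≤ s n := Nat.findGreatest_spec (P := fun k => b k ≤ s n) (Nat.zero_le n) hn
      calc dist (a (m n)) p / r n = b (m n) / r n := rfl
        _ ≤ s n / r n := div_le_div_of_nonneg_right hbm (hr.1 n).le
        _ = (s n)⁻¹ := by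
            rw [← Real.mul_self_sqrt (hr.1 n).le]
            rw [div_mul_eq_div_div]
            rw [div_self (Real.sqrt_pos.2 (hr.1 n)).ne', one_div]
    · exact tendsto_inv_atTop_zero.comp hs_top

lemma root_mem_seqInf {z : ℕ → X} (hz1 : Tendsto (fun n => dist (z n) p) atTop atTop)
    (hz2 : Tendsto (fun n => dist (z n) p / r n) atTop (nhds 0)) : z ∈ SeqInf r p :=
  ⟨hz1, 0, hz2⟩

/-- Any vertex distinct from the root class is adjacent to it. -/
lemma root_adjacent (hr : ScalingSeq r) {z : ℕ → X}
    (hz1 : Tendsto (fun n => dist (z n) p) atTop atTop)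
    (hz2 : Tendsto (fun n => dist (z n) p / r n) atTop (nhds 0))
    {u : Set (ℕ → X)} (hu : u ∈ VertexSet r p) (hne : u ≠ classOf r p z) :
    AdjacentCl r p u (classOf r p z) := by
  refine ⟨hu, ⟨z, root_mem_seqInf hz1 hz2, rfl⟩, hne, fun x hx y hy => ?_⟩
  have hxS : x ∈ SeqInf r p := mem_vertex_seqInf hu hx
  obtain ⟨L, hL⟩ := hxS.2
  have hyp : Tendsto (fun n => dist (y n) p / r n) atTop (nhds 0) := by
    refine tendsto_div_perturb hr hz2 hy.2 (fun n => ?_)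
    calc |dist (y n) p - dist (z n) p| ≤ dist (y n) (z n) + dist p p :=
          dist_dist_dist_le (y n) p (z n) p
      _ = dist (z n) (y n) := by rw [dist_self, add_zero, dist_comm]
  refine ⟨L, tendsto_div_perturb hr hL hyp (fun n => ?_)⟩
  calc |dist (x n) (y n) - dist (x n) p| ≤ dist (x n) (x n) + dist (y n) p :=
        dist_dist_dist_le (x n) (y n) (x n) p
    _ = dist (y n) p := by rw [dist_self, zero_add]

end Root
section Walks
variable {V : Type*} {adj : V → V → Prop} {w : V → V → ℝ}

/-- A walk of length `n` along `adj`. -/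
def IsWalk (adj : V → V → Prop) (n : ℕ) (f : ℕ → V) : Prop :=
  ∀ i < n, adj (f i) (f (i + 1))

/-- The weight of a walk of length `n`. -/
noncomputable def walkW (w : V → V → ℝ) (n : ℕ) (f : ℕ → V) : ℝ :=
  ∑ i ∈ Finset.range n, w (f i) (f (i + 1))

/-- De-looping: every walk contains an injective walk between the same endpoints of
no greater weight (assuming nonnegative weights on edges). -/
lemma deloop (hw : ∀ a b, adj a b → 0 ≤ w a b) (n : ℕ) :
    ∀ f : ℕ → V, IsWalk adj n f →
      ∃ m, ∃ g : ℕ → V, Set.InjOn g (Set.Iic m) ∧ g 0 = f 0 ∧ g m = f n ∧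
        IsWalk adj m g ∧ walkW w m g ≤ walkW w n f := by
  induction n using Nat.strong_induction_on with
  | _ n IH =>
    intro f hf
    by_cases hinj : Set.InjOn f (Set.Iic n)
    · exact ⟨n, f, hinj, rfl, rfl, hf, le_rfl⟩
    · have hex : ∃ a b, a ≤ n ∧ b ≤ n ∧ f a = f b ∧ a < b := by
        simp only [Set.InjOn, Set.mem_Iic, not_forall] at hinj
        obtain ⟨a, ha, b, hb, hab, hne⟩ := hinj
        rcases Nat.lt_or_ge a b with h | h
        · exact ⟨a, b, ha, hb, hab, h⟩
        · exact ⟨b, a, hb, ha, hab.symm, lt_of_le_of_ne h (Ne.symm hne)⟩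
      obtain ⟨a, b, _, hbn, hfeq, hlt⟩ := hex
      set d := b - a with hd
      have hd1 : 0 < d := Nat.sub_pos_of_lt hlt
      have hadb : a + d = b := Nat.add_sub_cancel' hlt.le
      have hdn : d ≤ n := le_trans (Nat.sub_le b a) hbn
      set m := n - d with hmdef
      have hmd : m + d = n := Nat.sub_add_cancel hdn
      have ham : a ≤ m := by
        rw [hmdef]
        rw [Nat.le_sub_iff_add_le hdn, hadb]
        exact hbn
      have hmn : m < n := by omega
      set f' : ℕ → V := fun k => if k ≤ a then f k else f (k + d) with hf'
      have key2 : ∀ k, k ≤ a → f' k = f k := fun k hk => by simp [hf', hk]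
      have key : ∀ k, a ≤ k → f' k = f (k + d) := by
        intro k hk
        rcases eq_or_lt_of_le hk with h | h
        · subst h
          simp [hf', hfeq, hadb]
        · simp [hf', Nat.not_le_of_lt h]
      have hwalk' : IsWalk adj m f' := by
        intro i him
        rcases Nat.lt_or_ge i a with h | h
        · rw [key2 i h.le, key2 (i + 1) h]
          exact hf i (by omega)
        · rw [key i h, key (i + 1) (by omega)]
          have : i + 1 + d = i + d + 1 := by omega
          rw [this]
          exact hf (i + d) (by omega)
      have hsum : walkW w m f' ≤ walkW w n f := by
        have hsplit : walkW w m f' =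
            (∑ i ∈ Finset.Ico 0 a, w (f' i) (f' (i + 1))) +
            ∑ i ∈ Finset.Ico a m, w (f' i) (f' (i + 1)) := by
          rw [walkW, Finset.range_eq_Ico,
            ← Finset.sum_Ico_consecutive _ (Nat.zero_le a) ham]
        have h1 : ∑ i ∈ Finset.Ico 0 a, w (f' i) (f' (i + 1)) =
            ∑ i ∈ Finset.Ico 0 a, w (f i) (f (i + 1)) := by
          refine Finset.sum_congr rfl fun i hi => ?_
          simp only [Finset.mem_Ico] at hi
          rw [key2 i (by omega), key2 (i + 1) (by omega)]
        have h2 : ∑ i ∈ Finset.Ico a m, w (f' i) (f' (i + 1)) =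
            ∑ i ∈ Finset.Ico b n, w (f i) (f (i + 1)) := by
          rw [Finset.sum_Ico_eq_sum_range, Finset.sum_Ico_eq_sum_range]
          have hcard : m - a = n - b := by omega
          rw [hcard]
          refine Finset.sum_congr rfl fun j hj => ?_
          simp only [Finset.mem_range] at hj
          rw [key (a + j) (by omega), key (a + j + 1) (by omega)]
          have e1 : a + j + d = b + j := by omega
          have e2 : a + j + 1 + d = b + j + 1 := by omega
          rw [e1, e2]
        rw [hsplit, h1, h2]
        have hfull : walkW w n f =
            ((∑ i ∈ Finset.Ico 0 a, w (f i) (f (i + 1))) +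
             ∑ i ∈ Finset.Ico a b, w (f i) (f (i + 1))) +
            ∑ i ∈ Finset.Ico b n, w (f i) (f (i + 1)) := by
          rw [walkW, Finset.range_eq_Ico,
            Finset.sum_Ico_consecutive _ (Nat.zero_le a) hlt.le,
            Finset.sum_Ico_consecutive _ (Nat.zero_le b) hbn]
        rw [hfull]
        have hmid : 0 ≤ ∑ i ∈ Finset.Ico a b, w (f i) (f (i + 1)) := by
          refine Finset.sum_nonneg fun i hi => ?_
          simp only [Finset.mem_Ico] at hi
          exact hw _ _ (hf i (by omega))
        linarith
      obtain ⟨m', g, hg1, hg2, hg3, hg4, hg5⟩ := IH m hmn f' hwalk'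
      refine ⟨m', g, hg1, ?_, ?_, hg4, le_trans hg5 hsum⟩
      · rw [hg2, key2 0 (Nat.zero_le a)]
      · rw [hg3, key m ham, hmd]

end Walks
section PW
variable {V : Type*} {adj : V → V → Prop} {w : V → V → ℝ} {u v z : V}

/-- From a path (element of `PathWeights`) extract a walk of the same weight. -/
lemma exists_walk_of_pathWeights {s : ℝ} (hs : s ∈ PathWeights adj w u v) :
    ∃ n, ∃ f : ℕ → V, IsWalk adj n f ∧ f 0 = u ∧ f n = v ∧ walkW w n f = s := by
  obtain ⟨n, F, h0, hl, _, hadj, hsum⟩ := hs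
  refine ⟨n, fun k => F ⟨min k n, Nat.lt_succ_of_le (min_le_right _ _)⟩, ?_, ?_, ?_, ?_⟩
  · intro i hi
    dsimp only
    have e1 : (⟨min i n, Nat.lt_succ_of_le (min_le_right _ _)⟩ : Fin (n + 1)) =
        (⟨i, hi⟩ : Fin n).castSucc := by
      apply Fin.ext; simp [Nat.min_eq_left hi.le]
    have e2 : (⟨min (i + 1) n, Nat.lt_succ_of_le (min_le_right _ _)⟩ : Fin (n + 1)) =
        (⟨i, hi⟩ : Fin n).succ := by
      apply Fin.ext; simp [Nat.min_eq_left hi]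
    rw [e1, e2]
    exact hadj ⟨i, hi⟩
  · dsimp only; rw [← h0]; congr 1
  · dsimp only; rw [← hl]; congr 1; apply Fin.ext; simp [Fin.last]
  · rw [hsum, walkW, ← Fin.sum_univ_eq_sum_range
      (fun k => w (F ⟨min k n, Nat.lt_succ_of_le (min_le_right _ _)⟩)
        (F ⟨min (k+1) n, Nat.lt_succ_of_le (min_le_right _ _)⟩)) n]
    refine Finset.sum_congr rfl fun i _ => ?_
    congr 1 <;> [skip; skip] <;> congr 1 <;> apply Fin.ext <;>
      simp [Nat.min_eq_left i.isLt.le, Nat.min_eq_left i.isLt]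

/-- An injective walk gives an element of `PathWeights`. -/
lemma walkW_mem_pathWeights {n : ℕ} {f : ℕ → V} (hwalk : IsWalk adj n f)
    (hinj : Set.InjOn f (Set.Iic n)) (h0 : f 0 = u) (hn : f n = v) :
    walkW w n f ∈ PathWeights adj w u v := by
  refine ⟨n, fun i => f i.val, by simpa using h0, by simpa [Fin.last] using hn, ?_, ?_, ?_⟩
  · intro i j hij
    exact Fin.ext (hinj (Nat.lt_succ_iff.1 i.isLt) (Nat.lt_succ_iff.1 j.isLt) hij)
  · intro i
    simpa [Fin.coe_castSucc, Fin.val_succ] using hwalk i.val i.isLt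
  · rw [walkW, ← Fin.sum_univ_eq_sum_range (fun k => w (f k) (f (k + 1))) n]
    exact Finset.sum_congr rfl fun i _ => by simp [Fin.coe_castSucc, Fin.val_succ]

/-- Concatenation + de-looping: the triangle step for path weights. -/
lemma pathWeights_triangle (hw : ∀ a b, adj a b → 0 ≤ w a b) (huz : u ≠ z)
    {s t : ℝ} (hs : s ∈ PathWeights adj w u v) (ht : t ∈ PathWeights adj w v z) :
    ∃ q ∈ PathWeights adj w u z, q ≤ s + t := by
  obtain ⟨n1, f1, hw1, hf10, hf1n, hsum1⟩ := exists_walk_of_pathWeights hs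
  obtain ⟨n2, f2, hw2, hf20, hf2n, hsum2⟩ := exists_walk_of_pathWeights ht
  set h : ℕ → V := fun k => if k ≤ n1 then f1 k else f2 (k - n1) with hh
  have hkey : ∀ k, n1 ≤ k → h k = f2 (k - n1) := by
    intro k hk
    rcases eq_or_lt_of_le hk with h' | h'
    · subst h'
      simp [hh, hf1n, ← hf20]
    · simp [hh, Nat.not_le_of_lt h']
  have hkey2 : ∀ k, k ≤ n1 → h k = f1 k := fun k hk => by simp [hh, hk]
  have hwalk : IsWalk adj (n1 + n2) h := by
    intro i hi
    rcases Nat.lt_or_ge i n1 with hc | hc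
    · rw [hkey2 i hc.le, hkey2 (i + 1) hc]
      exact hw1 i hc
    · rw [hkey i hc, hkey (i + 1) (by omega)]
      have : i + 1 - n1 = i - n1 + 1 := by omega
      rw [this]
      exact hw2 (i - n1) (by omega)
  have hW : walkW w (n1 + n2) h = s + t := by
    rw [walkW, Finset.sum_range_add]
    congr 1
    · rw [← hsum1, walkW]
      refine Finset.sum_congr rfl fun i hi => ?_
      simp only [Finset.mem_range] at hi
      rw [hkey2 i hi.le, hkey2 (i + 1) hi]
    · rw [← hsum2, walkW]
      refine Finset.sum_congr rfl fun i hi => ?_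
      rw [hkey (n1 + i) (by omega), hkey (n1 + i + 1) (by omega)]
      congr 2 <;> omega
  obtain ⟨m, g, hg1, hg2, hg3, hg4, hg5⟩ := deloop hw (n1 + n2) h hwalk
  refine ⟨walkW w m g, walkW_mem_pathWeights hg4 hg1 ?_ ?_, by rw [hW] at hg5; exact hg5⟩
  · rw [hg2, hkey2 0 (Nat.zero_le n1), hf10]
  · rw [hg3, hkey (n1 + n2) (by omega)]
    simpa using hf2n

lemma single_edge_mem_pathWeights (h : adj u v) (hne : u ≠ v) :
    w u v ∈ PathWeights adj w u v := by
  refine ⟨1, ![u, v], rfl, rfl, ?_, ?_, ?_⟩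
  · intro i j hij
    fin_cases i <;> fin_cases j <;> simp_all <;> exact absurd hij.symm hne
  · intro i
    fin_cases i
    simpa using h
  · simp

lemma two_path_mem_pathWeights {ν : V} (h1 : adj u ν) (h2 : adj ν v)
    (hne1 : u ≠ ν) (hne2 : v ≠ ν) (hne : u ≠ v) :
    w u ν + w ν v ∈ PathWeights adj w u v := by
  refine ⟨2, ![u, ν, v], rfl, rfl, ?_, ?_, ?_⟩
  · intro i j hij
    fin_cases i <;> fin_cases j <;> simp_all <;>
      first
      | rfl
      | exact absurd hij hne1 | exact absurd hij.symm hne1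
      | exact absurd hij hne2 | exact absurd hij.symm hne2
      | exact absurd hij hne | exact absurd hij.symm hne
  · intro i
    fin_cases i
    · simpa using h1
    · simpa using h2
  · simp [Fin.sum_univ_two]

/-- Reversal of paths. -/
lemma pathWeights_reverse (hadj : ∀ a b, adj a b → adj b a) (hwsym : ∀ a b, w a b = w b a) :
    PathWeights adj w u v ⊆ PathWeights adj w v u := by
  rintro s ⟨n, f, h0, hl, hinj, hadjc, hsum⟩
  refine ⟨n, f ∘ Fin.rev, by simp [Fin.rev_zero, hl], by simp [Fin.rev_last, h0], 
    hinj.comp Fin.rev_injective, ?_, ?_⟩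
  · intro i
    simp only [Function.comp_apply, Fin.rev_castSucc, Fin.rev_succ]
    exact hadj _ _ (hadjc i.rev)
  · rw [hsum]
    rw [← Equiv.sum_comp (Equiv.mk Fin.rev Fin.rev Fin.rev_rev Fin.rev_rev)
      (fun i => w (f i.castSucc) (f i.succ))]
    refine Finset.sum_congr rfl fun i _ => ?_
    simp only [Function.comp_apply, Fin.rev_castSucc, Fin.rev_succ, Equiv.coe_fn_mk]
    exact hwsym _ _

end PW
section Lower
variable {X : Type*} [MetricSpace X] {r : ℕ → ℝ} {p : X}

lemma pw_nonempty (hX : UnboundedSpace X) (hr : ScalingSeq r) {u v : Set (ℕ → X)}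
    (hu : u ∈ VertexSet r p) (hv : v ∈ VertexSet r p) (hne : u ≠ v) :
    (PathWeights (AdjacentCl r p) (rhoX r) u v).Nonempty := by
  obtain ⟨z, hz1, hz2⟩ := exists_root hX hr p
  set ν := classOf r p z with hν
  by_cases h1 : u = ν
  · have hadj : AdjacentCl r p v ν := root_adjacent hr hz1 hz2 hv (by rw [← hν, ← h1]; exact hne.symm)
    rw [← h1] at hadj
    exact ⟨_, single_edge_mem_pathWeights (adjacent_symm hadj) hne⟩
  by_cases h2 : v = ν
  · have hadj : AdjacentCl r p u ν := root_adjacent hr hz1 hz2 hu h1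
    rw [← h2] at hadj
    exact ⟨_, single_edge_mem_pathWeights hadj hne⟩
  · have hadj1 : AdjacentCl r p u ν := root_adjacent hr hz1 hz2 hu h1
    have hadj2 : AdjacentCl r p ν v := adjacent_symm (root_adjacent hr hz1 hz2 hv h2)
    exact ⟨_, two_path_mem_pathWeights hadj1 hadj2 h1 h2 hne⟩

lemma pathWeights_nonneg (hr : ScalingSeq r) {u v : Set (ℕ → X)} {s : ℝ}
    (hs : s ∈ PathWeights (AdjacentCl r p) (rhoX r) u v) : 0 ≤ s := by
  obtain ⟨n, F, _, _, _, hadj, rfl⟩ := hs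
  exact Finset.sum_nonneg fun i _ => rhoX_nonneg hr (hadj i)

lemma pathWeights_bddBelow {u v : Set (ℕ → X)} (hr : ScalingSeq r) :
    BddBelow (PathWeights (AdjacentCl r p) (rhoX r) u v) :=
  ⟨0, fun s hs => pathWeights_nonneg hr hs⟩

lemma isBoundedUnder_dist_div (hr : ScalingSeq r) {u v : Set (ℕ → X)}
    (hu : u ∈ VertexSet r p) (hv : v ∈ VertexSet r p) {x y : ℕ → X}
    (hx : x ∈ u) (hy : y ∈ v) :
    IsBoundedUnder (· ≤ ·) atTop (fun n => dist (x n) (y n) / r n) := by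
  obtain ⟨Lx, hLx⟩ := (mem_vertex_seqInf hu hx).2
  obtain ⟨Ly, hLy⟩ := (mem_vertex_seqInf hv hy).2
  refine ((hLx.add hLy).isBoundedUnder_le).mono_le (Filter.Eventually.of_forall fun n => ?_)
  have h1 : dist (x n) (y n) ≤ dist (x n) p + dist (y n) p := by
    rw [dist_comm (y n) p]; exact dist_triangle _ _ _
  calc dist (x n) (y n) / r n ≤ (dist (x n) p + dist (y n) p) / r n :=
        div_le_div_of_nonneg_right h1 (hr.1 n).le
    _ = dist (x n) p / r n + dist (y n) p / r n := by rw [add_div]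

/-- The key lower bound: the limsup of normalized distances of representatives is at most
the weight of any path joining the two vertices. -/
lemma limsup_le_pathWeight (hr : ScalingSeq r) {u v : Set (ℕ → X)}
    (hu : u ∈ VertexSet r p) (hv : v ∈ VertexSet r p) {x y : ℕ → X}
    (hx : x ∈ u) (hy : y ∈ v) {s : ℝ}
    (hs : s ∈ PathWeights (AdjacentCl r p) (rhoX r) u v) :
    Filter.limsup (fun n => dist (x n) (y n) / r n) atTop ≤ s := by
  obtain ⟨N, F, h0, hl, _, hadj, hsum⟩ := hs
  have hV : ∀ i, F i ∈ VertexSet r p := by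
    intro i
    induction i using Fin.cases with
    | zero => rw [h0]; exact hu
    | succ j => exact (hadj j).2.1
  have hFne : ∀ i, ∃ a, a ∈ F i := fun i => vertex_nonempty (hV i)
  choose ξ hξ using hFne
  set g : ℕ → ℝ := fun n => ∑ i : Fin N, dist (ξ i.castSucc n) (ξ i.succ n) / r n with hg
  have hgs : Tendsto g atTop (nhds s) := by
    rw [hsum]
    exact tendsto_finset_sum _ fun i _ => rhoX_spec hr (hadj i) (hξ i.castSucc) (hξ i.succ)
  have hx0 : EquivSeq r x (ξ 0) := mem_vertex_equiv hr hu hx (h0 ▸ hξ 0)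
  have hyl : EquivSeq r (ξ (Fin.last N)) y := mem_vertex_equiv hr hv (hl ▸ hξ (Fin.last N)) hy
  set e : ℕ → ℝ := fun n => dist (x n) (ξ 0 n) / r n + dist (ξ (Fin.last N) n) (y n) / r n
    with he
  have he0 : Tendsto e atTop (nhds 0) := by simpa using hx0.add hyl
  have hle : ∀ n, dist (x n) (y n) / r n ≤ e n + g n := by
    intro n
    have hchain : dist (ξ 0 n) (ξ (Fin.last N) n) ≤
        ∑ i : Fin N, dist (ξ i.castSucc n) (ξ i.succ n) := by
      have := dist_le_range_sum_dist
        (fun k => ξ ⟨min k N, Nat.lt_succ_of_le (min_le_right _ _)⟩ n) N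
      have e0 : (⟨min 0 N, Nat.lt_succ_of_le (min_le_right _ _)⟩ : Fin (N + 1)) = 0 := by
        apply Fin.ext; simp
      have eN : (⟨min N N, Nat.lt_succ_of_le (min_le_right _ _)⟩ : Fin (N + 1)) =
          Fin.last N := by apply Fin.ext; simp [Fin.last]
      rw [e0, eN] at this
      refine this.trans (le_of_eq ?_)
      rw [← Fin.sum_univ_eq_sum_range
        (fun k => dist (ξ ⟨min k N, Nat.lt_succ_of_le (min_le_right _ _)⟩ n)
          (ξ ⟨min (k+1) N, Nat.lt_succ_of_le (min_le_right _ _)⟩ n)) N]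
      refine Finset.sum_congr rfl fun i _ => ?_
      congr 2 <;> apply Fin.ext <;>
        simp [Nat.min_eq_left i.isLt.le, Nat.min_eq_left i.isLt, Fin.coe_castSucc, Fin.val_succ]
    have htri : dist (x n) (y n) ≤
        dist (x n) (ξ 0 n) + dist (ξ 0 n) (ξ (Fin.last N) n) + dist (ξ (Fin.last N) n) (y n) :=
      dist_triangle4 _ _ _ _
    have hrn := hr.1 n
    calc dist (x n) (y n) / r n
        ≤ (dist (x n) (ξ 0 n) + dist (ξ 0 n) (ξ (Fin.last N) n) +
            dist (ξ (Fin.last N) n) (y n)) / r n := div_le_div_of_nonneg_right htri hrn.le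
      _ = dist (x n) (ξ 0 n) / r n + dist (ξ 0 n) (ξ (Fin.last N) n) / r n +
            dist (ξ (Fin.last N) n) (y n) / r n := by rw [add_div, add_div]
      _ ≤ e n + g n := by
          have : dist (ξ 0 n) (ξ (Fin.last N) n) / r n ≤ g n := by
            show _ ≤ ∑ i : Fin N, dist (ξ i.castSucc n) (ξ i.succ n) / r n
            rw [← Finset.sum_div]
            exact div_le_div_of_nonneg_right hchain hrn.le
          rw [he]
          linarith
  have hcb : IsCoboundedUnder (· ≤ ·) atTop (fun n => dist (x n) (y n) / r n) :=
    isCoboundedUnder_le_of_le atTop (fun n => div_nonneg dist_nonneg (hr.1 n).le)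
  have hbd : IsBoundedUnder (· ≤ ·) atTop (fun n => e n + g n) :=
    (he0.add hgs).isBoundedUnder_le
  calc Filter.limsup (fun n => dist (x n) (y n) / r n) atTop
      ≤ Filter.limsup (fun n => e n + g n) atTop :=
        limsup_le_limsup (Filter.Eventually.of_forall hle) hcb hbd
    _ = s := by
        have : Tendsto (fun n => e n + g n) atTop (nhds (0 + s)) := he0.add hgs
        rw [zero_add] at this
        exact this.limsup_eq

end Lower
/-- Proposition p1.4.14. The weighted shortest-path pseudometric
`d*_{ρ_X}` on the vertex set of the weighted cluster `G_{X,r̃}(ρ_X)` is a metric,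
and `G_{X,r̃}(ρ_X)` is metrizable by it. -/
theorem cluster_metrizable_by_shortest_path {X : Type*} [MetricSpace X]
    (hX : UnboundedSpace X) (p : X) (r : ℕ → ℝ) (hr : ScalingSeq r) :
    (∀ u ∈ VertexSet r p, ∀ v ∈ VertexSet r p,
        (spDist (AdjacentCl r p) (rhoX r) u v = 0 ↔ u = v)) ∧
    (∀ u ∈ VertexSet r p, ∀ v ∈ VertexSet r p,
        spDist (AdjacentCl r p) (rhoX r) u v = spDist (AdjacentCl r p) (rhoX r) v u) ∧
    (∀ u ∈ VertexSet r p, ∀ v ∈ VertexSet r p, ∀ z ∈ VertexSet r p,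
        spDist (AdjacentCl r p) (rhoX r) u z ≤
          spDist (AdjacentCl r p) (rhoX r) u v + spDist (AdjacentCl r p) (rhoX r) v z) ∧
    (∀ u v : Set (ℕ → X), AdjacentCl r p u v →
        spDist (AdjacentCl r p) (rhoX r) u v = rhoX r u v) := by
  have spnonneg : ∀ a b : Set (ℕ → X), 0 ≤ spDist (AdjacentCl r p) (rhoX r) a b := by
    intro a b
    rw [spDist]
    split
    · exact le_rfl
    · exact Real.sInf_nonneg fun s hs => pathWeights_nonneg hr hs
  refine ⟨?_, ?_, ?_, ?_⟩
  · -- d = 0 ↔ equality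
    intro u hu v hv
    constructor
    · intro h0
      by_contra hne
      rw [spDist, if_neg hne] at h0
      obtain ⟨x, hx⟩ := vertex_nonempty hu
      obtain ⟨y, hy⟩ := vertex_nonempty hv
      have hls : Filter.limsup (fun n => dist (x n) (y n) / r n) atTop ≤ 0 := by
        rw [← h0]
        exact le_csInf (pw_nonempty hX hr hu hv hne)
          (fun s hs => limsup_le_pathWeight hr hu hv hx hy hs)
      have hbd := isBoundedUnder_dist_div hr hu hv hx hy
      have htend : Tendsto (fun n => dist (x n) (y n) / r n) atTop (nhds 0) := by
        refine tendsto_order.2 ⟨fun a ha => Filter.Eventually.of_forall fun n =>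
          lt_of_lt_of_le ha (div_nonneg dist_nonneg (hr.1 n).le), fun a ha =>
          eventually_lt_of_limsup_lt (lt_of_le_of_lt hls ha) hbd⟩
      exact hne (vertex_eq_of_equiv hr hu hv hx hy htend)
    · intro h
      rw [spDist, if_pos h]
  · -- symmetry
    intro u _ v _
    by_cases h : u = v
    · rw [h]
    · rw [spDist, spDist, if_neg h, if_neg (Ne.symm h)]
      congr 1
      exact Set.Subset.antisymm
        (pathWeights_reverse (fun a b hab => adjacent_symm hab) (fun a b => rhoX_symm a b))
        (pathWeights_reverse (fun a b hab => adjacent_symm hab) (fun a b => rhoX_symm a b))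
  · -- triangle inequality
    intro u hu v hv z hz
    by_cases huv : u = v
    · subst huv
      have h0 : spDist (AdjacentCl r p) (rhoX r) u u = 0 := by rw [spDist, if_pos rfl]
      rw [h0, zero_add]
    by_cases hvz : v = z
    · subst hvz
      have h0 : spDist (AdjacentCl r p) (rhoX r) v v = 0 := by rw [spDist, if_pos rfl]
      rw [h0, add_zero]
    by_cases huz : u = z
    · rw [spDist, if_pos huz]
      exact add_nonneg (spnonneg u v) (spnonneg v z)
    · simp only [spDist, if_neg huz, if_neg huv, if_neg hvz]
      have hw : ∀ a b, AdjacentCl r p a b → 0 ≤ rhoX r a b := fun a b h => rhoX_nonneg hr h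
      have key : ∀ s ∈ PathWeights (AdjacentCl r p) (rhoX r) u v,
          ∀ t ∈ PathWeights (AdjacentCl r p) (rhoX r) v z,
          sInf (PathWeights (AdjacentCl r p) (rhoX r) u z) ≤ s + t := by
        intro s hs t ht
        obtain ⟨q, hq, hql⟩ := pathWeights_triangle hw huz hs ht
        exact (csInf_le (pathWeights_bddBelow hr) hq).trans hql
      have hA := pw_nonempty hX hr hu hv huv
      have hB := pw_nonempty hX hr hv hz hvz
      have step1 : ∀ s ∈ PathWeights (AdjacentCl r p) (rhoX r) u v,
          sInf (PathWeights (AdjacentCl r p) (rhoX r) u z) - s ≤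
            sInf (PathWeights (AdjacentCl r p) (rhoX r) v z) :=
        fun s hs => le_csInf hB fun t ht => by linarith [key s hs t ht]
      have step2 : sInf (PathWeights (AdjacentCl r p) (rhoX r) u z) -
          sInf (PathWeights (AdjacentCl r p) (rhoX r) v z) ≤
            sInf (PathWeights (AdjacentCl r p) (rhoX r) u v) :=
        le_csInf hA fun s hs => by linarith [step1 s hs]
      linarith
  · -- metrizability
    intro u v hadj
    have hne := hadj.2.2.1
    rw [spDist, if_neg hne]
    apply le_antisymm
    · exact csInf_le (pathWeights_bddBelow hr) (single_edge_mem_pathWeights hadj hne)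
    · obtain ⟨x, hx⟩ := vertex_nonempty hadj.1
      obtain ⟨y, hy⟩ := vertex_nonempty hadj.2.1
      have hlim := rhoX_spec hr hadj hx hy
      refine le_csInf (pw_nonempty hX hr hadj.1 hadj.2.1 hne) fun s hs => ?_
      rw [← hlim.limsup_eq]
      exact limsup_le_pathWeight hr hadj.1 hadj.2.1 hx hy hs
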